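/- Let ν be a Lévy measure on ℝ (i.e., ν({0}) = 0 and ∫(x² ∧ 1) ν(dx) < ∞) admitting a density p(x) = ν(dx)/dx such that 0 < liminf_{|x|→0} |x|^{1+α} p(x) ≤ limsup_{|x|→0} |x|^{1+α} p(x) < ∞ for some α ∈ (0,2). Then ν ∈ 𝒮₁(α): there exist Lévy measures ν₁, ν₂ with ν = ν₁ + ν₂, where ν₁(dx) = k(x)|x|^{-α-1} 𝟙_{x≠0} dx with 0 < liminf_{x→0} k(x) ≤ limsup_{x→0} k(x) < ∞ and x ↦ k(x)/|x|^α nondecreasing on (-∞,0) and nonincreasing on (0,∞), and limsup_{|u|→∞} |u|^{-α} ∫(1 - cos(ux)) ν₂(dx) < ∞. -/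

import Mathlib

open MeasureTheory Filter

/-- A Lévy measure on `ℝ`: no mass at `0` and `∫ (x² ∧ 1) ν(dx) < ∞`. -/
def IsLevyMeasure (ν : Measure ℝ) : Prop :=
  ν {0} = 0 ∧ ∫⁻ x, ENNReal.ofReal (min (x ^ 2) 1) ∂ν < ⊤

/-- `∫ (1 - cos(ux)) ν(dx)` as an `ℝ≥0∞`-valued integral. -/
noncomputable def cosInt (ν : Measure ℝ) (u : ℝ) : ENNReal :=
  ∫⁻ x, ENNReal.ofReal (1 - Real.cos (u * x)) ∂ν

/-- The filter `|u| → ∞`. -/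
def absAtTop : Filter ℝ := Filter.comap (fun u : ℝ => |u|) Filter.atTop

/-- The class `𝒮₂(α)`: `0 < liminf_{|u|→∞} |u|^{-α} ∫(1-cos(ux))ν(dx) ≤ limsup < ∞`. -/
noncomputable def MemS2 (α : ℝ) (ν : Measure ℝ) : Prop :=
  0 < Filter.liminf (fun u : ℝ => cosInt ν u / ENNReal.ofReal (|u| ^ α)) absAtTop ∧
  Filter.limsup (fun u : ℝ => cosInt ν u / ENNReal.ofReal (|u| ^ α)) absAtTop < ⊤

/-- The class `𝒮₁(α)`: `ν = ν₁ + ν₂` with `ν₁` having a density `k(x)/|x|^{α+1}` where `k`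
is bounded away from `0` and `∞` near the origin and `k(x)/|x|^α` is monotone on each
half-line, while `ν₂` satisfies `limsup_{|u|→∞} |u|^{-α} ∫(1-cos(ux))ν₂(dx) < ∞`. -/
noncomputable def MemS1 (α : ℝ) (ν : Measure ℝ) : Prop :=
  ∃ (ν₁ ν₂ : Measure ℝ) (k : ℝ → ℝ),
    IsLevyMeasure ν₁ ∧ IsLevyMeasure ν₂ ∧ ν = ν₁ + ν₂ ∧
    ν₁ = volume.withDensity
      (fun x => if x = 0 then 0 else ENNReal.ofReal (k x / |x| ^ (α + 1))) ∧
    (∃ c C : ℝ, 0 < c ∧ ∀ᶠ x in nhdsWithin 0 {(0 : ℝ)}ᶜ, c ≤ k x ∧ k x ≤ C) ∧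
    (∀ x y : ℝ, x ≤ y → y < 0 → k x / |x| ^ α ≤ k y / |y| ^ α) ∧
    (∀ x y : ℝ, 0 < x → x ≤ y → k y / |y| ^ α ≤ k x / |x| ^ α) ∧
    (∃ C : ℝ, ∀ᶠ u in absAtTop, cosInt ν₂ u ≤ ENNReal.ofReal (C * |u| ^ α))


open Real Set
open scoped ENNReal

lemma one_sub_cos_le (t : ℝ) : 1 - Real.cos t ≤ 2 * min (t^2) 1 := by
  have h1 : Real.cos t = Real.cos (t/2)^2 - Real.sin (t/2)^2 := by
    rw [← Real.cos_two_mul']; ring_nf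
  have h2 : Real.sin (t/2)^2 + Real.cos (t/2)^2 = 1 := Real.sin_sq_add_cos_sq _
  have h3 : Real.sin (t/2)^2 ≤ (t/2)^2 := Real.sin_sq_le_sq
  rcases le_total (t^2) 1 with h | h
  · rw [min_eq_left h]; nlinarith
  · rw [min_eq_right h]; nlinarith [Real.neg_one_le_cos t]

lemma lint_neg (h : ℝ → ℝ≥0∞) (hm : Measurable h) (s : Set ℝ) (hs : MeasurableSet s) :
    ∫⁻ x in (Neg.neg ⁻¹' s), h x = ∫⁻ x in s, h (-x) := by
  have : (volume : Measure ℝ).restrict (Neg.neg ⁻¹' s)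
      = Measure.map Neg.neg (volume.restrict s) := by
    conv_lhs => rw [← Measure.map_neg_eq_self (volume : Measure ℝ)]
    rw [Measure.restrict_map measurable_neg (hs.preimage measurable_neg)]
    congr 1
    simp [Set.preimage_preimage]
  rw [this, lintegral_map hm measurable_neg]

lemma core_est {α D ε v : ℝ} (hα : 0 < α) (hα2 : α < 2) (hD : 0 ≤ D) (hv : 1 ≤ v)
    (hεv : 1/v ≤ ε) :
    ∫⁻ x in Set.Ioc (0:ℝ) ε,
        ENNReal.ofReal (2 * min (v^2*x^2) 1) * ENNReal.ofReal (D / |x| ^ (α+1))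
      ≤ ENNReal.ofReal ((2*D/(2-α) + 2*D/α) * v^α) := by
  have hv0 : (0:ℝ) < v := lt_of_lt_of_le one_pos hv
  have hιv : (0:ℝ) < 1/v := by positivity
  have hsplit : Set.Ioc (0:ℝ) ε = Set.Ioc 0 (1/v) ∪ Set.Ioc (1/v) ε :=
    (Set.Ioc_union_Ioc_eq_Ioc hιv.le hεv).symm
  rw [hsplit]
  refine le_trans (lintegral_union_le _ _ _) ?_
  have hb1 : ∫⁻ x in Set.Ioc (0:ℝ) (1/v),
      ENNReal.ofReal (2 * min (v^2*x^2) 1) * ENNReal.ofReal (D / |x| ^ (α+1))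
      ≤ ENNReal.ofReal (2*D/(2-α) * v^α) := by
    have step : ∫⁻ x in Set.Ioc (0:ℝ) (1/v),
        ENNReal.ofReal (2 * min (v^2*x^2) 1) * ENNReal.ofReal (D / |x| ^ (α+1))
        ≤ ∫⁻ x in Set.Ioc (0:ℝ) (1/v), ENNReal.ofReal (2*D*v^2 * x ^ (1-α)) := by
      refine setLIntegral_mono (by fun_prop) ?_
      intro x hx
      rcases hx with ⟨hx0, hx1⟩
      rw [← ENNReal.ofReal_mul (by positivity)]
      apply ENNReal.ofReal_le_ofReal
      have hxabs : |x| = x := abs_of_pos hx0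
      rw [hxabs]
      have h1 : 2 * min (v^2*x^2) 1 * (D / x ^ (α+1)) ≤ 2 * (v^2*x^2) * (D / x ^ (α+1)) := by
        have : (0:ℝ) ≤ D / x ^ (α+1) := by positivity
        nlinarith [min_le_left (v^2*x^2) (1:ℝ)]
      refine h1.trans (le_of_eq ?_)
      have hx2 : x ^ ((2:ℝ)) = x^2 := by
        rw [show ((2:ℝ)) = ((2:ℕ):ℝ) by norm_num, Real.rpow_natCast]
      have hpow : x ^ ((1:ℝ)-α) = x ^ ((2:ℝ)) / x ^ (α+1) := by
        rw [← Real.rpow_sub hx0]; congr 1; ring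
      rw [hpow, hx2]
      field_simp
    refine step.trans ?_
    have hint : IntegrableOn (fun x : ℝ => 2*D*v^2 * x ^ (1-α)) (Set.Ioc 0 (1/v)) := by
      have := (intervalIntegral.intervalIntegrable_rpow' (a := 0) (b := 1/v) (r := 1-α) (by linarith))
      rw [intervalIntegrable_iff_integrableOn_Ioc_of_le hιv.le] at this
      exact this.const_mul _
    have hnn : 0 ≤ᵐ[volume.restrict (Set.Ioc (0:ℝ) (1/v))]
        (fun x : ℝ => 2*D*v^2 * x ^ (1-α)) := by
      refine ae_restrict_of_forall_mem measurableSet_Ioc ?_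
      intro x hx
      have := Real.rpow_nonneg hx.1.le (1-α)
      positivity
    rw [← MeasureTheory.ofReal_integral_eq_lintegral_ofReal hint hnn]
    apply ENNReal.ofReal_le_ofReal
    rw [MeasureTheory.integral_const_mul]
    rw [← intervalIntegral.integral_of_le hιv.le]
    rw [integral_rpow (Or.inl (by linarith))]
    rw [show (1:ℝ)-α+1 = 2-α by ring]
    rw [Real.zero_rpow (by linarith : (2:ℝ)-α ≠ 0), sub_zero]
    rw [one_div, Real.inv_rpow hv0.le, ← Real.rpow_neg hv0.le]
    have hvv : v^2 * v ^ (-(2-α)) = v ^ α := by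
      have hv2 : v ^ ((2:ℝ)) = v^2 := by
        rw [show ((2:ℝ)) = ((2:ℕ):ℝ) by norm_num, Real.rpow_natCast]
      rw [← hv2, ← Real.rpow_add hv0]; congr 1; ring
    rw [show (2:ℝ)*D/(2-α)*v^α = 2*D*(v^2*v^(-(2-α)))/(2-α) by rw [hvv]; ring]
    apply le_of_eq; ring
  have hb2 : ∫⁻ x in Set.Ioc (1/v) ε,
      ENNReal.ofReal (2 * min (v^2*x^2) 1) * ENNReal.ofReal (D / |x| ^ (α+1))
      ≤ ENNReal.ofReal (2*D/α * v^α) := by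
    have step : ∫⁻ x in Set.Ioc (1/v) ε,
        ENNReal.ofReal (2 * min (v^2*x^2) 1) * ENNReal.ofReal (D / |x| ^ (α+1))
        ≤ ∫⁻ x in Set.Ioi (1/v), ENNReal.ofReal (2*D * x ^ (-(α+1))) := by
      refine le_trans (lintegral_mono_set Set.Ioc_subset_Ioi_self) ?_
      refine setLIntegral_mono (by fun_prop) ?_
      intro x hx
      have hx0 : (0:ℝ) < x := lt_trans hιv hx
      rw [← ENNReal.ofReal_mul (by positivity)]
      apply ENNReal.ofReal_le_ofReal
      have hxabs : |x| = x := abs_of_pos hx0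
      rw [hxabs]
      have h1 : 2 * min (v^2*x^2) 1 * (D / x ^ (α+1)) ≤ 2 * 1 * (D / x ^ (α+1)) := by
        have : (0:ℝ) ≤ D / x ^ (α+1) := by positivity
        nlinarith [min_le_right (v^2*x^2) (1:ℝ)]
      refine h1.trans (le_of_eq ?_)
      rw [Real.rpow_neg hx0.le]
      field_simp
    refine step.trans ?_
    have hint : IntegrableOn (fun x : ℝ => 2*D * x ^ (-(α+1))) (Set.Ioi (1/v)) :=
      (integrableOn_Ioi_rpow_of_lt (by linarith) hιv).const_mul _
    have hnn : 0 ≤ᵐ[volume.restrict (Set.Ioi (1/v))]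
        (fun x : ℝ => 2*D * x ^ (-(α+1))) := by
      refine ae_restrict_of_forall_mem measurableSet_Ioi ?_
      intro x hx
      have hx0 : (0:ℝ) < x := lt_trans hιv hx
      have := Real.rpow_nonneg hx0.le (-(α+1))
      positivity
    rw [← MeasureTheory.ofReal_integral_eq_lintegral_ofReal hint hnn]
    apply ENNReal.ofReal_le_ofReal
    rw [MeasureTheory.integral_const_mul]
    rw [integral_Ioi_rpow_of_lt (by linarith) hιv]
    rw [show -(α+1)+1 = -α by ring]
    rw [one_div, Real.inv_rpow hv0.le, ← Real.rpow_neg hv0.le, neg_neg, neg_div_neg_eq]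
    apply le_of_eq; ring
  calc _ ≤ ENNReal.ofReal (2*D/(2-α) * v^α) + ENNReal.ofReal (2*D/α * v^α) :=
        add_le_add hb1 hb2
    _ = ENNReal.ofReal ((2*D/(2-α) + 2*D/α) * v^α) := by
        have h2α : (0:ℝ) < 2-α := by linarith
        rw [← ENNReal.ofReal_add (by positivity) (by positivity)]
        ring_nf

/-- a Lévy measure with density comparable to `|x|^{-1-α}` near the origin
belongs to `𝒮₁(α)`. -/
theorem stmt3 (α : ℝ) (hα : α ∈ Set.Ioo (0 : ℝ) 2) (ν : Measure ℝ) (hν : IsLevyMeasure ν)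
    (p : ℝ → ℝ)
    (hp : ν = volume.withDensity (fun x => ENNReal.ofReal (p x)))
    (hbounds : ∃ c C : ℝ, 0 < c ∧
      ∀ᶠ x in nhdsWithin 0 {(0 : ℝ)}ᶜ, c ≤ |x| ^ (1 + α) * p x ∧ |x| ^ (1 + α) * p x ≤ C) :
    MemS1 α ν := by
  obtain ⟨hα0, hα2⟩ := hα
  obtain ⟨c, C, hc, hev⟩ := hbounds
  rw [eventually_nhdsWithin_iff, Metric.eventually_nhds_iff] at hev
  obtain ⟨δ, hδ0, hδ⟩ := hev
  set ε : ℝ := δ/2 with hεdef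
  have hε : 0 < ε := by positivity
  have hbd : ∀ x : ℝ, x ≠ 0 → |x| ≤ ε →
      c ≤ |x| ^ (1+α) * p x ∧ |x| ^ (1+α) * p x ≤ C := by
    intro x hx0 hxε
    refine hδ ?_ (by simpa using hx0)
    rw [Real.dist_0_eq_abs]
    calc |x| ≤ ε := hxε
      _ < δ := by rw [hεdef]; linarith
  set k : ℝ → ℝ := fun x => if |x| ≤ ε then c else 0 with hkdef
  set f : ℝ → ℝ≥0∞ :=
    fun x => if x = 0 then 0 else ENNReal.ofReal (k x / |x| ^ (α + 1)) with hfdef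
  have hf_meas : Measurable f := by
    have hk : Measurable k := Measurable.ite
      (isClosed_le continuous_abs continuous_const).measurableSet
      measurable_const measurable_const
    have habs : Measurable fun x : ℝ => |x| ^ (α+1) := by fun_prop
    exact Measurable.ite (measurableSet_eq) measurable_const (hk.div habs).ennreal_ofReal
  have hle : ∀ x : ℝ, f x ≤ ENNReal.ofReal (p x) := by
    intro x
    by_cases hx0 : x = 0
    · simp [hfdef, hx0]
    · rw [hfdef]
      simp only [if_neg hx0]
      by_cases hxε : |x| ≤ ε
      · apply ENNReal.ofReal_le_ofReal
        have hxa : 0 < |x| := abs_pos.mpr hx0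
        have hxp : 0 < |x| ^ (α+1) := Real.rpow_pos_of_pos hxa _
        have h1 := (hbd x hx0 hxε).1
        rw [hkdef]
        simp only [if_pos hxε]
        rw [div_le_iff₀ hxp]
        rw [show α + 1 = 1 + α by ring]
        nlinarith
      · rw [hkdef]
        simp only [if_neg hxε, zero_div, ENNReal.ofReal_zero]
        exact zero_le
  set ν₁ : Measure ℝ := volume.withDensity f with hν₁def
  set ν₂ : Measure ℝ := volume.withDensity (fun x => ENNReal.ofReal (p x) - f x) with hν₂def
  have hν1le : ν₁ ≤ ν := by
    rw [hp, hν₁def]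
    exact withDensity_mono (ae_of_all _ hle)
  have hν2le : ν₂ ≤ ν := by
    rw [hp, hν₂def]
    exact withDensity_mono (ae_of_all _ fun x => tsub_le_self)
  have hsum : ν = ν₁ + ν₂ := by
    rw [hp, hν₁def, hν₂def, ← withDensity_add_left hf_meas]
    congr 1
    funext x
    exact (add_tsub_cancel_of_le (hle x)).symm
  have hsingle : ∀ (g : ℝ → ℝ≥0∞), (volume.withDensity g) {0} = 0 := by
    intro g
    rw [withDensity_apply _ (measurableSet_singleton 0)]
    rw [Measure.restrict_eq_zero.mpr Real.volume_singleton]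
    exact lintegral_zero_measure _
  have hlevy1 : IsLevyMeasure ν₁ :=
    ⟨hsingle f, lt_of_le_of_lt (lintegral_mono' hν1le le_rfl) hν.2⟩
  have hlevy2 : IsLevyMeasure ν₂ :=
    ⟨hsingle _, lt_of_le_of_lt (lintegral_mono' hν2le le_rfl) hν.2⟩
  refine ⟨ν₁, ν₂, k, hlevy1, hlevy2, hsum, rfl, ?_, ?_, ?_, ?_⟩
  · refine ⟨c, c, hc, ?_⟩
    have h1 : ∀ᶠ x : ℝ in nhds 0, |x| ≤ ε := by
      rw [Metric.eventually_nhds_iff]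
      exact ⟨ε, hε, fun {y} hy => by rw [Real.dist_0_eq_abs] at hy; exact hy.le⟩
    refine ((h1.filter_mono nhdsWithin_le_nhds).mono ?_)
    intro x hx
    rw [hkdef]
    simp only [if_pos hx]
    exact ⟨le_refl c, le_refl c⟩
  · intro x y hxy hy0
    have hy : 0 < |y| := abs_pos.mpr hy0.ne
    have hyx : |y| ≤ |x| := by
      rw [abs_of_neg hy0, abs_of_neg (lt_of_le_of_lt hxy hy0)]; linarith
    by_cases hx : |x| ≤ ε
    · have hyε : |y| ≤ ε := le_trans hyx hx
      rw [hkdef]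
      simp only [if_pos hx, if_pos hyε]
      have h1 : |y| ^ α ≤ |x| ^ α := Real.rpow_le_rpow hy.le hyx hα0.le
      have h2 : 0 < |y| ^ α := Real.rpow_pos_of_pos hy _
      exact div_le_div_of_nonneg_left hc.le h2 h1
    · rw [hkdef]
      simp only [if_neg hx, zero_div]
      apply div_nonneg _ (Real.rpow_nonneg (abs_nonneg y) α)
      split_ifs
      exacts [hc.le, le_refl 0]
  · intro x y hx0 hxy
    have hx : 0 < |x| := abs_pos.mpr hx0.ne'
    have hxy' : |x| ≤ |y| := by
      rw [abs_of_pos hx0, abs_of_pos (lt_of_lt_of_le hx0 hxy)]; exact hxy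
    by_cases hy : |y| ≤ ε
    · have hxε : |x| ≤ ε := le_trans hxy' hy
      rw [hkdef]
      simp only [if_pos hy, if_pos hxε]
      have h1 : |x| ^ α ≤ |y| ^ α := Real.rpow_le_rpow hx.le hxy' hα0.le
      have h2 : 0 < |x| ^ α := Real.rpow_pos_of_pos hx _
      exact div_le_div_of_nonneg_left hc.le h2 h1
    · rw [hkdef]
      simp only [if_neg hy, zero_div]
      apply div_nonneg _ (Real.rpow_nonneg (abs_nonneg x) α)
      split_ifs
      exacts [hc.le, le_refl 0]
  · set D : ℝ := max C 1 with hDdef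
    have hD0 : (0:ℝ) ≤ D := le_trans zero_le_one (le_max_right _ _)
    set A : Set ℝ := {x | |x| ≤ ε} with hAdef
    have hA_meas : MeasurableSet A :=
      (isClosed_le continuous_abs continuous_const).measurableSet
    have hAc : ν Aᶜ < ⊤ := by
      have hm0 : (0:ℝ) < min (ε^2) 1 := lt_min (by positivity) one_pos
      have h1 : ENNReal.ofReal (min (ε^2) 1) * ν Aᶜ
          ≤ ∫⁻ x, ENNReal.ofReal (min (x^2) 1) ∂ν := by
        rw [← setLIntegral_const Aᶜ (ENNReal.ofReal (min (ε^2) 1))]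
        refine le_trans (setLIntegral_mono (by fun_prop) ?_) (setLIntegral_le_lintegral _ _)
        intro x hx
        apply ENNReal.ofReal_le_ofReal
        have hx' : ε < |x| := not_le.mp hx
        have h2 : ε^2 ≤ x^2 := by nlinarith [abs_nonneg x, sq_abs x]
        exact min_le_min h2 (le_refl 1)
      refine ENNReal.lt_top_of_mul_ne_top_right (ne_top_of_le_ne_top hν.2.ne h1) ?_
      simp only [ne_eq, ENNReal.ofReal_eq_zero, not_le]
      exact hm0
    set B : ℝ := (2 * ν Aᶜ).toReal with hBdef
    have hB0 : 0 ≤ B := ENNReal.toReal_nonneg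
    have hB : 2 * ν Aᶜ = ENNReal.ofReal B := by
      rw [hBdef, ENNReal.ofReal_toReal]
      exact ENNReal.mul_ne_top (by norm_num) hAc.ne
    have h2mα : (0:ℝ) < 2 - α := by linarith
    set Kc : ℝ := 2*D/(2-α) + 2*D/α with hKdef
    have hKc0 : 0 ≤ Kc := by positivity
    refine ⟨2*Kc + B, ?_⟩
    have hev' : ∀ᶠ u in absAtTop, max 1 (1/ε) ≤ |u| :=
      Filter.eventually_comap.mpr ((Filter.eventually_ge_atTop (max 1 (1/ε))).mono
        fun b hb a ha => by rw [ha]; exact hb)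
    refine hev'.mono ?_
    intro u hu
    set v : ℝ := |u| with hvdef
    have hv1 : 1 ≤ v := le_trans (le_max_left _ _) hu
    have hv0 : 0 < v := lt_of_lt_of_le one_pos hv1
    have hεv : 1/v ≤ ε := by
      have h2 : 1/ε ≤ v := le_trans (le_max_right _ _) hu
      rw [div_le_iff₀ hv0]
      have h3 := (div_le_iff₀ hε).mp h2
      nlinarith
    have hvα : 1 ≤ v ^ α := Real.one_le_rpow hv1 hα0.le
    have hvα0 : 0 ≤ v ^ α := le_trans zero_le_one hvα
    set g : ℝ → ℝ≥0∞ := fun x => ENNReal.ofReal (2 * min (v^2*x^2) 1) with hgdef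
    have hg_meas : Measurable g := by
      have hcont : Continuous fun x : ℝ => 2 * min (v^2*x^2) 1 :=
        continuous_const.mul ((continuous_const.mul (continuous_pow 2)).min continuous_const)
      exact hcont.measurable.ennreal_ofReal
    have step1 : cosInt ν₂ u ≤ ∫⁻ x in A, g x ∂ν + ∫⁻ x in Aᶜ, g x ∂ν := by
      rw [lintegral_add_compl g hA_meas]
      refine le_trans (lintegral_mono' hν2le le_rfl) (lintegral_mono fun x => ?_)
      apply ENNReal.ofReal_le_ofReal
      have h := one_sub_cos_le (u*x)
      rwa [mul_pow, ← sq_abs u] at h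
    have hout : ∫⁻ x in Aᶜ, g x ∂ν ≤ ENNReal.ofReal B := by
      have h2 : ∫⁻ x in Aᶜ, g x ∂ν ≤ ∫⁻ _ in Aᶜ, (2:ℝ≥0∞) ∂ν := by
        refine setLIntegral_mono measurable_const fun x _ => ?_
        rw [show (2:ℝ≥0∞) = ENNReal.ofReal 2 by simp]
        apply ENNReal.ofReal_le_ofReal
        nlinarith [min_le_right (v^2*x^2) (1:ℝ), sq_nonneg v, sq_nonneg x]
      refine h2.trans (le_of_eq ?_)
      rw [setLIntegral_const, hB]
    set q : ℝ → ℝ≥0∞ := fun x => ENNReal.ofReal (D / |x| ^ (α+1)) with hqdef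
    have hq_meas : Measurable q := by fun_prop
    have hres : ν.restrict A ≤ (volume.restrict A).withDensity q := by
      rw [hp, restrict_withDensity hA_meas]
      refine withDensity_mono ?_
      have h0 : ∀ᵐ (x : ℝ) ∂(volume.restrict A), x ≠ 0 := by
        refine ae_restrict_of_ae ?_
        rw [ae_iff]
        have hset : {x : ℝ | ¬ x ≠ 0} = {0} := by ext x; simp
        rw [hset]
        exact Real.volume_singleton
      filter_upwards [h0, ae_restrict_mem hA_meas] with x hx0 hxA
      apply ENNReal.ofReal_le_ofReal
      have hxa : 0 < |x| := abs_pos.mpr hx0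
      have hxp : 0 < |x| ^ (α+1) := Real.rpow_pos_of_pos hxa _
      have h2 := (hbd x hx0 hxA).2
      rw [le_div_iff₀ hxp, show α+1 = 1+α by ring]
      calc p x * |x|^(1+α) = |x|^(1+α) * p x := mul_comm _ _
        _ ≤ C := h2
        _ ≤ D := le_max_left _ _
    have h3 : ∫⁻ x in A, g x ∂ν ≤ ∫⁻ x in A, q x * g x ∂volume := by
      calc ∫⁻ x in A, g x ∂ν ≤ ∫⁻ x, g x ∂((volume.restrict A).withDensity q) :=
            lintegral_mono' hres le_rfl
        _ = ∫⁻ x in A, (q * g) x ∂volume :=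
            lintegral_withDensity_eq_lintegral_mul _ hq_meas hg_meas
        _ = ∫⁻ x in A, q x * g x ∂volume := rfl
    have hAeq : A = Set.Icc (-ε) 0 ∪ Set.Ioc 0 ε := by
      rw [Set.Icc_union_Ioc_eq_Icc (by linarith : -ε ≤ (0:ℝ)) hε.le]
      ext x; simp [hAdef, abs_le]
    have hpos : ∫⁻ x in Set.Ioc 0 ε, q x * g x ∂volume ≤ ENNReal.ofReal (Kc * v^α) := by
      refine le_trans (le_of_eq (lintegral_congr fun x => mul_comm _ _)) ?_
      exact core_est hα0 hα2 hD0 hv1 hεv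
    have hneg : ∫⁻ x in Set.Icc (-ε) 0, q x * g x ∂volume ≤ ENNReal.ofReal (Kc * v^α) := by
      have hpre : Set.Icc (-ε) 0 = Neg.neg ⁻¹' (Set.Icc 0 ε) := by
        ext x
        simp only [Set.mem_Icc, Set.mem_preimage]
        constructor
        · rintro ⟨h1, h2⟩; constructor <;> linarith
        · rintro ⟨h1, h2⟩; constructor <;> linarith
      rw [hpre, lint_neg (fun x => q x * g x) (hq_meas.mul hg_meas) _ measurableSet_Icc]
      have hsym : ∀ x : ℝ, q (-x) * g (-x) = q x * g x := by
        intro x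
        rw [hqdef, hgdef]
        simp only [abs_neg, neg_sq]
      simp only [hsym]
      rw [Measure.restrict_congr_set Ioc_ae_eq_Icc.symm]
      exact hpos
    have hin : ∫⁻ x in A, g x ∂ν
        ≤ ENNReal.ofReal (Kc * v^α) + ENNReal.ofReal (Kc * v^α) := by
      refine h3.trans ?_
      refine le_trans (le_of_eq (by rw [hAeq])) ?_
      refine le_trans (lintegral_union_le _ _ _) ?_
      exact add_le_add hneg hpos
    refine step1.trans (le_trans (add_le_add hin hout) ?_)
    rw [← ENNReal.ofReal_add (by positivity) (by positivity),
      ← ENNReal.ofReal_add (by positivity) hB0]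
    apply ENNReal.ofReal_le_ofReal
    nlinarith
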